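/- arXiv:1305.1009 — 2 statements merged into one kernel-verified Lean document; each statement's English description precedes it below -/
import Mathlib

section
/- Let 0 < η ≤ 1, ε > 0 small, and let v ∈ C¹ on the annulus {ξ ∈ ℝ² : R₂εη ≤ |ξ| ≤ (2b−1)R₂ε} where b > 1, R₂ > 0 are fixed. Suppose v is written in polar coordinates v(r,φ). If χ₁ is a smooth cutoff equal to 1 for t < 1 and 0 for t > 2, then for R₂εη ≤ r ≤ bR₂εη one has |v(r,φ)|² ≤ C(|ln η| + 1)·∫_{R₂εη}^{(2b−1)R₂ε} ( |∂v/∂t (t,φ)|² + ε^{-2}|v(t,φ)|² ) t dt, where C depends only on b, R₂ and χ₁ but not on ε, η, v, r, φ. -/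
open MeasureTheory Set

/-- Cauchy–Schwarz for integrals, via the discriminant trick. -/
lemma cs_integral {μ : Measure ℝ} {f h : ℝ → ℝ}
    (hf2 : Integrable (fun x => f x ^ 2) μ) (hh2 : Integrable (fun x => h x ^ 2) μ)
    (hfh : Integrable (fun x => f x * h x) μ) :
    (∫ x, f x * h x ∂μ) ^ 2 ≤ (∫ x, f x ^ 2 ∂μ) * (∫ x, h x ^ 2 ∂μ) := by
  set A := ∫ x, f x ^ 2 ∂μ with hA
  set Bq := ∫ x, f x * h x ∂μ with hB
  set Cq := ∫ x, h x ^ 2 ∂μ with hC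
  have key : ∀ lam : ℝ, 0 ≤ A * (lam * lam) + (2 * Bq) * lam + Cq := by
    intro lam
    have h0 : 0 ≤ ∫ x, (lam * f x + h x) ^ 2 ∂μ := integral_nonneg fun x => sq_nonneg _
    have hexp : ∫ x, (lam * f x + h x) ^ 2 ∂μ
        = (lam * lam) * A + (2 * lam) * Bq + Cq := by
      have e1 : (fun x => (lam * f x + h x) ^ 2)
          = fun x => ((lam * lam) * f x ^ 2 + (2 * lam) * (f x * h x)) + h x ^ 2 := by
        funext x; ring
      have i12 := integral_add (μ := μ)
        ((hf2.const_mul (lam * lam)).add (hfh.const_mul (2 * lam))) hh2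
      have i1 := integral_add (μ := μ) (hf2.const_mul (lam * lam)) (hfh.const_mul (2 * lam))
      simp only [Pi.add_apply] at i12
      rw [e1, i12, i1, integral_const_mul, integral_const_mul]
    nlinarith [h0, hexp]
  have hd := discrim_le_zero key
  rw [discrim] at hd
  nlinarith [hd]

set_option maxHeartbeats 2000000 in
/-- The main 1-D estimate, for a function of one variable. -/
lemma trace_aux (b R₂ : ℝ) (hb : 1 < b) (hR₂ : 0 < R₂)
    (ε : ℝ) (hε : 0 < ε) (η : ℝ) (hη : 0 < η) (hη1 : η ≤ 1)
    (g : ℝ → ℝ) (hg : ContDiff ℝ 1 g)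
    (r : ℝ) (hra : R₂ * ε * η ≤ r) (hrb : r ≤ b * R₂ * ε * η) :
    (g r)^2 ≤ (2 * (2 / (((2*b-1)^2 - b^2) * R₂^2)) + 2 * Real.log (2*b-1) + 2)
        * (|Real.log η| + 1) *
      (∫ t in Ioo (R₂ * ε * η) ((2*b - 1) * R₂ * ε),
        ((deriv g t)^2 + ε⁻¹^2 * (g t)^2) * t) := by
  have hK : (0:ℝ) < ((2*b-1)^2 - b^2) * R₂^2 := by
    have h1 : (0:ℝ) < (3*b-1)*(b-1) := by nlinarith
    have h2 : ((2*b-1)^2 - b^2) * R₂^2 = ((3*b-1)*(b-1)) * R₂^2 := by ring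
    rw [h2]; exact mul_pos h1 (by positivity)
  set c₂ : ℝ := 2 / (((2*b-1)^2 - b^2) * R₂^2) with hc₂def
  have hc₂ : 0 < c₂ := hc₂def ▸ div_pos two_pos hK
  have hlogb : 0 < Real.log (2*b-1) := Real.log_pos (by nlinarith)
  set a : ℝ := R₂ * ε * η with hadef
  set B : ℝ := (2*b - 1) * R₂ * ε with hBdef
  set s₀ : ℝ := b * R₂ * ε with hs₀def
  have ha : 0 < a := by rw [hadef]; positivity
  have hr0 : 0 < r := lt_of_lt_of_le ha hra
  have hs₀B : s₀ < B := by rw [hs₀def, hBdef]; nlinarith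
  have has₀ : a ≤ s₀ := by rw [hadef, hs₀def]; nlinarith
  have hrs₀ : r ≤ s₀ := le_trans hrb (by rw [hs₀def]; nlinarith)
  have hgc : Continuous g := hg.continuous
  have hDc : Continuous (deriv g) := hg.continuous_deriv le_rfl
  set D : ℝ → ℝ := deriv g with hDdef
  set I : ℝ := ∫ t in Ioo a B, (D t ^ 2 + ε⁻¹ ^ 2 * g t ^ 2) * t with hIdef
  -- integrability facts
  have hF : IntegrableOn (fun t => (D t ^ 2 + ε⁻¹ ^ 2 * g t ^ 2) * t) (Ioo a B) :=
    (((((hDc.pow 2).add (continuous_const.mul (hgc.pow 2))).mul continuous_id).continuousOn).integrableOn_Icc).mono_set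
      Ioo_subset_Icc_self
  have hFD : IntegrableOn (fun t => D t ^ 2 * t) (Ioo a B) :=
    ((((hDc.pow 2).mul continuous_id).continuousOn).integrableOn_Icc).mono_set Ioo_subset_Icc_self
  have hFg : IntegrableOn (fun t => ε⁻¹ ^ 2 * (g t ^ 2 * t)) (Ioo a B) :=
    (((continuous_const.mul ((hgc.pow 2).mul continuous_id)).continuousOn).integrableOn_Icc).mono_set
      Ioo_subset_Icc_self
  have hI0 : 0 ≤ I := by
    rw [hIdef]
    refine setIntegral_nonneg measurableSet_Ioo fun t ht => ?_
    have ht0 : 0 < t := lt_trans ha ht.1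
    positivity
  -- ∫_{Ioo a B} D² t ≤ I
  have hQ2 : ∫ t in Ioo a B, D t ^ 2 * t ≤ I := by
    rw [hIdef]
    refine setIntegral_mono_on hFD hF measurableSet_Ioo fun t ht => ?_
    have ht0 : 0 < t := lt_trans ha ht.1
    nlinarith [sq_nonneg (g t), sq_nonneg ε⁻¹,
      mul_nonneg (mul_nonneg (sq_nonneg ε⁻¹) (sq_nonneg (g t))) ht0.le]
  -- ∫_{Ioo a B} ε⁻²g² t ≤ I
  have hG2 : ∫ t in Ioo a B, ε⁻¹ ^ 2 * (g t ^ 2 * t) ≤ I := by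
    rw [hIdef]
    refine setIntegral_mono_on hFg hF measurableSet_Ioo fun t ht => ?_
    have ht0 : 0 < t := lt_trans ha ht.1
    nlinarith [sq_nonneg (D t)]
  -- choose the minimizing point w on [s₀, B]
  obtain ⟨w, hw, hwmin⟩ := (isCompact_Icc (a := s₀) (b := B)).exists_isMinOn
    (nonempty_Icc.mpr hs₀B.le) ((hgc.pow 2).continuousOn)
  have hrw : r ≤ w := le_trans hrs₀ hw.1
  -- bound g w ^ 2 by c₂ * I
  have hgw : g w ^ 2 ≤ c₂ * I := by
    have h1 : g w ^ 2 * ((B^2 - s₀^2)/2) ≤ ∫ t in Ioo s₀ B, g t ^ 2 * t := by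
      have hint : ∫ t in Ioo s₀ B, (t:ℝ) = (B^2 - s₀^2)/2 := by
        rw [← integral_Ioc_eq_integral_Ioo, ← intervalIntegral.integral_of_le hs₀B.le,
          integral_id]
      have hi1 : IntegrableOn (fun t : ℝ => g w ^ 2 * t) (Ioo s₀ B) :=
        ((continuous_const.mul continuous_id).continuousOn.integrableOn_Icc).mono_set
          Ioo_subset_Icc_self
      have hi2 : IntegrableOn (fun t : ℝ => g t ^ 2 * t) (Ioo s₀ B) :=
        (((hgc.pow 2).mul continuous_id).continuousOn.integrableOn_Icc).mono_set
          Ioo_subset_Icc_self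
      have hmono : ∀ t ∈ Ioo s₀ B, g w ^ 2 * t ≤ g t ^ 2 * t := by
        intro t ht
        have ht0 : 0 < t := lt_of_le_of_lt (le_trans ha.le has₀) ht.1
        have hmin := isMinOn_iff.mp hwmin t (Ioo_subset_Icc_self ht)
        exact mul_le_mul_of_nonneg_right hmin ht0.le
      have hmon := setIntegral_mono_on hi1 hi2 measurableSet_Ioo hmono
      rwa [integral_const_mul, hint] at hmon
    have h2 : ∫ t in Ioo s₀ B, ε⁻¹ ^ 2 * (g t ^ 2 * t) ≤ I := by
      refine le_trans (setIntegral_mono_set hFg ?_ ?_) hG2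
      · filter_upwards [ae_restrict_mem measurableSet_Ioo] with t ht
        have ht0 : 0 < t := lt_trans ha ht.1
        positivity
      · exact HasSubset.Subset.eventuallyLE (Ioo_subset_Ioo has₀ le_rfl)
    rw [integral_const_mul] at h2
    have h3 : ε⁻¹ ^ 2 * (g w ^ 2 * ((B^2 - s₀^2)/2)) ≤ I :=
      le_trans (mul_le_mul_of_nonneg_left h1 (by positivity)) h2
    have hBs : ε⁻¹ ^ 2 * ((B^2 - s₀^2)/2) = (((2*b-1)^2 - b^2) * R₂^2) / 2 := by
      rw [hBdef, hs₀def]; field_simp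
    have h4 : g w ^ 2 * ((((2*b-1)^2 - b^2) * R₂^2) / 2) ≤ I := by
      calc g w ^ 2 * ((((2*b-1)^2 - b^2) * R₂^2) / 2)
          = ε⁻¹ ^ 2 * (g w ^ 2 * ((B^2 - s₀^2)/2)) := by rw [← hBs]; ring
        _ ≤ I := h3
    rw [hc₂def, div_mul_eq_mul_div, le_div_iff₀ hK]
    linarith [h4]
  -- FTC
  have hftc : ∫ y in r..w, D y = g w - g r := by
    rw [hDdef]
    exact intervalIntegral.integral_deriv_eq_sub
      (fun x _ => (hg.differentiable one_ne_zero).differentiableAt) (hDc.intervalIntegrable r w)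
  -- ∫_{Ioc r w} D² t ≤ I
  have hQle : ∫ x in Ioc r w, D x ^ 2 * x ≤ I := by
    refine le_trans (setIntegral_mono_set hFD ?_ ?_) hQ2
    · filter_upwards [ae_restrict_mem measurableSet_Ioo] with t ht
      have ht0 : 0 < t := lt_trans ha ht.1
      positivity
    · refine MeasureTheory.ae_le_set.mpr (measure_mono_null ?_ (measure_singleton B))
      intro t ht
      obtain ⟨⟨htr, htw⟩, hnot⟩ := ht
      have hta : a < t := lt_of_le_of_lt hra htr
      have htB : t ≤ B := le_trans htw hw.2
      simp only [mem_Ioo, not_and, not_lt] at hnot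
      exact mem_singleton_iff.mpr (le_antisymm htB (hnot hta))
  have hwr1 : (1:ℝ) ≤ w / r := (one_le_div hr0).mpr hrw
  have hQ0 : 0 ≤ ∫ x in Ioc r w, D x ^ 2 * x := by
    refine setIntegral_nonneg measurableSet_Ioc fun x hx => ?_
    have hx0 : 0 < x := lt_trans hr0 hx.1
    positivity
  have hL0 : 0 ≤ Real.log (2*b-1) + |Real.log η| :=
    add_nonneg hlogb.le (abs_nonneg _)
  -- Cauchy–Schwarz with weight 1/t
  have hcs : (∫ y in r..w, D y) ^ 2 ≤
      (Real.log (2*b-1) + |Real.log η|) * I := by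
    have hsq_cont : ContinuousOn (fun x => (Real.sqrt x)⁻¹) (Icc r w) :=
      Real.continuous_sqrt.continuousOn.inv₀ fun x hx =>
        ne_of_gt (Real.sqrt_pos.mpr (lt_of_lt_of_le hr0 hx.1))
    have hf2 : IntegrableOn (fun x => ((Real.sqrt x)⁻¹) ^ 2) (Ioc r w) :=
      ((hsq_cont.pow 2).integrableOn_Icc).mono_set Ioc_subset_Icc_self
    have hh2 : IntegrableOn (fun x => (Real.sqrt x * D x) ^ 2) (Ioc r w) :=
      (((Real.continuous_sqrt.continuousOn.mul hDc.continuousOn).pow 2).integrableOn_Icc).mono_set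
        Ioc_subset_Icc_self
    have hfh : IntegrableOn (fun x => (Real.sqrt x)⁻¹ * (Real.sqrt x * D x)) (Ioc r w) :=
      ((hsq_cont.mul (Real.continuous_sqrt.continuousOn.mul hDc.continuousOn)).integrableOn_Icc).mono_set
        Ioc_subset_Icc_self
    have key := cs_integral (μ := volume.restrict (Ioc r w)) hf2 hh2 hfh
    have e1 : ∫ x in Ioc r w, (Real.sqrt x)⁻¹ * (Real.sqrt x * D x) = ∫ x in Ioc r w, D x := by
      refine setIntegral_congr_fun measurableSet_Ioc fun x hx => ?_
      have hx0 : 0 < x := lt_trans hr0 hx.1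
      rw [← mul_assoc, inv_mul_cancel₀ (ne_of_gt (Real.sqrt_pos.mpr hx0)), one_mul]
    have e2 : ∫ x in Ioc r w, ((Real.sqrt x)⁻¹) ^ 2 = ∫ x in Ioc r w, x⁻¹ := by
      refine setIntegral_congr_fun measurableSet_Ioc fun x hx => ?_
      have hx0 : 0 < x := lt_trans hr0 hx.1
      rw [inv_pow, Real.sq_sqrt hx0.le]
    have e3 : ∫ x in Ioc r w, (Real.sqrt x * D x) ^ 2 = ∫ x in Ioc r w, D x ^ 2 * x := by
      refine setIntegral_congr_fun measurableSet_Ioc fun x hx => ?_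
      have hx0 : 0 < x := lt_trans hr0 hx.1
      rw [mul_pow, Real.sq_sqrt hx0.le]; ring
    rw [e1, e2, e3] at key
    have einv : ∫ x in Ioc r w, x⁻¹ = Real.log (w / r) := by
      rw [← intervalIntegral.integral_of_le hrw,
        integral_inv (Set.notMem_uIcc_of_lt hr0 (lt_of_lt_of_le hr0 hrw))]
    rw [einv] at key
    have hlog_le : Real.log (w / r) ≤ Real.log (2*b-1) + |Real.log η| := by
      have hB0 : 0 ≤ B := by rw [hBdef]; nlinarith
      have h5 : w / r ≤ B / a := div_le_div₀ hB0 hw.2 ha hra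
      have h6 : Real.log (w / r) ≤ Real.log (B / a) :=
        Real.log_le_log (lt_of_lt_of_le one_pos hwr1) h5
      have h7 : B / a = (2*b-1) / η := by
        rw [hBdef, hadef]; field_simp
      have h8 : Real.log ((2*b-1) / η) = Real.log (2*b-1) - Real.log η :=
        Real.log_div (by nlinarith) (ne_of_gt hη)
      rw [h7, h8] at h6
      have := neg_le_abs (Real.log η)
      linarith
    calc (∫ y in r..w, D y) ^ 2
        ≤ Real.log (w / r) * ∫ x in Ioc r w, D x ^ 2 * x := by
          rw [intervalIntegral.integral_of_le hrw]; exact key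
      _ ≤ (Real.log (2*b-1) + |Real.log η|) * I :=
          mul_le_mul hlog_le hQle hQ0 hL0
  have hgr : g r = g w - ∫ y in r..w, D y := by linarith [hftc]
  have hX : (g r) ^ 2 ≤ 2 * g w ^ 2 + 2 * (∫ y in r..w, D y) ^ 2 := by
    rw [hgr]; nlinarith [sq_nonneg (g w + ∫ y in r..w, D y)]
  calc (g r) ^ 2 ≤ 2 * g w ^ 2 + 2 * (∫ y in r..w, D y) ^ 2 := hX
    _ ≤ (2 * c₂ + 2 * Real.log (2*b-1) + 2) * (|Real.log η| + 1) * I := by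
        nlinarith [hgw, hcs, hI0, abs_nonneg (Real.log η), hc₂, hlogb,
          mul_nonneg (mul_nonneg hc₂.le (abs_nonneg (Real.log η))) hI0,
          mul_nonneg (mul_nonneg hlogb.le (abs_nonneg (Real.log η))) hI0]

/-- Logarithmic trace estimate in polar coordinates: for `v ∈ C¹` written as `v(r,φ)`,
if `R₂εη ≤ r ≤ bR₂εη` then
`|v(r,φ)|² ≤ C(|ln η| + 1) ∫_{R₂εη}^{(2b−1)R₂ε} (|∂v/∂t|² + ε⁻²|v|²) t dt`,
with `C` depending only on `b`, `R₂`. -/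
theorem stmt_3 (b R₂ : ℝ) (hb : 1 < b) (hR₂ : 0 < R₂) :
    ∃ C > (0:ℝ), ∀ ε > (0:ℝ), ∀ η : ℝ, 0 < η → η ≤ 1 →
      ∀ v : ℝ × ℝ → ℝ, ContDiff ℝ 1 v →
        ∀ r φ : ℝ, R₂ * ε * η ≤ r → r ≤ b * R₂ * ε * η →
          (v (r, φ))^2 ≤ C * (|Real.log η| + 1) *
            (∫ t in Ioo (R₂ * ε * η) ((2*b - 1) * R₂ * ε),
              ((deriv (fun s => v (s, φ)) t)^2 + ε⁻¹^2 * (v (t, φ))^2) * t) := by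
  have hK : (0:ℝ) < ((2*b-1)^2 - b^2) * R₂^2 := by
    have h1 : (0:ℝ) < (3*b-1)*(b-1) := by nlinarith
    have h2 : ((2*b-1)^2 - b^2) * R₂^2 = ((3*b-1)*(b-1)) * R₂^2 := by ring
    rw [h2]; exact mul_pos h1 (by positivity)
  have hc₂ : (0:ℝ) < 2 / (((2*b-1)^2 - b^2) * R₂^2) := div_pos two_pos hK
  have hlogb : 0 < Real.log (2*b-1) := Real.log_pos (by nlinarith)
  refine ⟨2 * (2 / (((2*b-1)^2 - b^2) * R₂^2)) + 2 * Real.log (2*b-1) + 2, by positivity, ?_⟩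
  intro ε hε η hη hη1 v hv r φ hra hrb
  exact trace_aux b R₂ hb hR₂ ε hε η hη hη1 (fun t => v (t, φ))
    (hv.comp (contDiff_id.prodMk contDiff_const)) r hra hrb
end

section
/- Let (c^u_p)_{p∈ℤ}, (c^v_q)_{q∈ℤ}, (c^α_m)_{m∈ℤ} be sequences of complex numbers with A² := Σ_p |c^u_p|²(1+|p|)³ < ∞, B² := Σ_q |c^v_q|²(1+|q|) < ∞, and K² := Σ_m |c^α_m|²/(1+|m|) < ∞. Then Σ_{p,q} |c^u_p||c^v_q||c^α_{q−p}| ≤ C·A·B·K for an absolute constant C. -/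
private lemma aux_nat_sum : Summable (fun n : ℕ => 1 / (1 + (n : ℝ)) ^ 2) := by
  have h := (summable_nat_add_iff 1).2 (Real.summable_one_div_nat_pow.2 one_lt_two)
  refine h.congr fun n => ?_
  push_cast
  ring_nf

private lemma aux_S2 : Summable (fun p : ℤ => 1 / (1 + |(p : ℝ)|) ^ 2) := by
  refine Summable.of_nat_of_neg ?_ ?_
  · refine aux_nat_sum.congr fun n => ?_
    simp
  · refine aux_nat_sum.congr fun n => ?_
    simp

private lemma aux_key (p m : ℤ) :
    1 / ((1 + |(p : ℝ)|) ^ 3 * (1 + |((p + m : ℤ) : ℝ)|)) ≤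
      2 / ((1 + |(m : ℝ)|) * (1 + |(p : ℝ)|) ^ 2) := by
  set x : ℝ := 1 + |(p : ℝ)| with hxdef
  set y : ℝ := 1 + |((p + m : ℤ) : ℝ)| with hydef
  have hx1 : 1 ≤ x := le_add_of_nonneg_right (abs_nonneg _)
  have hy1 : 1 ≤ y := le_add_of_nonneg_right (abs_nonneg _)
  have hm : |(m : ℝ)| ≤ |(p : ℝ)| + |((p + m : ℤ) : ℝ)| := by
    have hrw : (m : ℝ) = ((p + m : ℤ) : ℝ) - (p : ℝ) := by push_cast; ring
    rw [hrw]
    have := abs_sub ((p + m : ℤ) : ℝ) ((p : ℝ))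
    linarith
  have h1 : 1 + |(m : ℝ)| ≤ x + y := by
    rw [hxdef, hydef]; linarith
  have h2 : x + y ≤ 2 * (x * y) := by nlinarith
  rw [div_le_div_iff₀ (by positivity) (by positivity)]
  have h3 : (1 + |(m : ℝ)|) * x ^ 2 ≤ (2 * (x * y)) * x ^ 2 :=
    mul_le_mul_of_nonneg_right (h1.trans h2) (sq_nonneg x)
  nlinarith [sq_nonneg x]

set_option maxHeartbeats 2000000 in
/-- Discrete bilinear estimate: if `A² = Σ|c^u_p|²(1+|p|)³`, `B² = Σ|c^v_q|²(1+|q|)` and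
`K² = Σ|c^α_m|²/(1+|m|)` are finite, then `Σ_{p,q}|c^u_p||c^v_q||c^α_{q−p}| ≤ C·A·B·K`
for an absolute constant `C`. -/
theorem stmt_14 : ∃ C > (0:ℝ), ∀ cu cv ca : ℤ → ℂ,
    Summable (fun p : ℤ => ‖cu p‖^2 * (1 + |(p:ℝ)|)^3) →
    Summable (fun q : ℤ => ‖cv q‖^2 * (1 + |(q:ℝ)|)) →
    Summable (fun m : ℤ => ‖ca m‖^2 / (1 + |(m:ℝ)|)) →
    (∑' pq : ℤ × ℤ, ‖cu pq.1‖ * ‖cv pq.2‖ * ‖ca (pq.2 - pq.1)‖) ≤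
      C * Real.sqrt (∑' p : ℤ, ‖cu p‖^2 * (1 + |(p:ℝ)|)^3) *
        Real.sqrt (∑' q : ℤ, ‖cv q‖^2 * (1 + |(q:ℝ)|)) *
        Real.sqrt (∑' m : ℤ, ‖ca m‖^2 / (1 + |(m:ℝ)|)) := by
  classical
  set S2 : ℝ := ∑' p : ℤ, 1 / (1 + |(p : ℝ)|) ^ 2 with hS2def
  have hS2ge : (1 : ℝ) ≤ S2 := by
    have h := Summable.le_tsum aux_S2 0 (fun j _ => by positivity)
    rw [hS2def]
    refine le_trans (le_of_eq ?_) h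
    norm_num
  have hS2pos : (0 : ℝ) < S2 := lt_of_lt_of_le one_pos hS2ge
  refine ⟨Real.sqrt (2 * S2), Real.sqrt_pos.2 (by linarith), ?_⟩
  intro cu cv ca hu hv ha
  set A2 : ℝ := ∑' p : ℤ, ‖cu p‖^2 * (1 + |(p:ℝ)|)^3 with hA2def
  set B2 : ℝ := ∑' q : ℤ, ‖cv q‖^2 * (1 + |(q:ℝ)|) with hB2def
  set K2 : ℝ := ∑' m : ℤ, ‖ca m‖^2 / (1 + |(m:ℝ)|) with hK2def
  have hA2nn : 0 ≤ A2 := tsum_nonneg fun p => by positivity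
  have hB2nn : 0 ≤ B2 := tsum_nonneg fun q => by positivity
  have hK2nn : 0 ≤ K2 := tsum_nonneg fun m => by positivity
  set f : ℤ × ℤ → ℝ := fun z =>
    (‖cu z.1‖ * Real.sqrt ((1 + |(z.1:ℝ)|)^3)) * (‖cv z.2‖ * Real.sqrt (1 + |(z.2:ℝ)|)) with hfdef
  set g : ℤ × ℤ → ℝ := fun z =>
    ‖ca (z.2 - z.1)‖ / (Real.sqrt ((1 + |(z.1:ℝ)|)^3) * Real.sqrt (1 + |(z.2:ℝ)|)) with hgdef
  have hsq1 : ∀ p : ℤ, (0:ℝ) < Real.sqrt ((1 + |(p:ℝ)|)^3) :=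
    fun p => Real.sqrt_pos.2 (by positivity)
  have hsq2 : ∀ q : ℤ, (0:ℝ) < Real.sqrt (1 + |(q:ℝ)|) :=
    fun q => Real.sqrt_pos.2 (by positivity)
  have hf0 : ∀ z, 0 ≤ f z := fun z => by
    simp only [hfdef]; positivity
  have hg0 : ∀ z, 0 ≤ g z := fun z => by
    simp only [hgdef]; positivity
  have hfg : ∀ z : ℤ × ℤ, f z * g z = ‖cu z.1‖ * ‖cv z.2‖ * ‖ca (z.2 - z.1)‖ := by
    intro z
    have h1 := (hsq1 z.1).ne'
    have h2 := (hsq2 z.2).ne'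
    simp only [hfdef, hgdef]
    field_simp
  have hf2 : ∀ z : ℤ × ℤ,
      f z ^ 2 = (‖cu z.1‖^2 * (1 + |(z.1:ℝ)|)^3) * (‖cv z.2‖^2 * (1 + |(z.2:ℝ)|)) := by
    intro z
    simp only [hfdef, mul_pow]
    rw [Real.sq_sqrt (by positivity), Real.sq_sqrt (by positivity)]
    try ring
  have hg2 : ∀ z : ℤ × ℤ,
      g z ^ 2 = ‖ca (z.2 - z.1)‖^2 / ((1 + |(z.1:ℝ)|)^3 * (1 + |(z.2:ℝ)|)) := by
    intro z
    simp only [hgdef]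
    rw [div_pow, mul_pow, Real.sq_sqrt (by positivity), Real.sq_sqrt (by positivity)]
  -- summability of f^2 and value of its sum
  have hprod : Summable (fun z : ℤ × ℤ =>
      (‖cu z.1‖^2 * (1 + |(z.1:ℝ)|)^3) * (‖cv z.2‖^2 * (1 + |(z.2:ℝ)|))) :=
    hu.mul_of_nonneg hv (fun p => by positivity) (fun q => by positivity)
  have hfs : Summable (fun z : ℤ × ℤ => f z ^ 2) :=
    hprod.congr fun z => (hf2 z).symm
  have htf : ∑' z : ℤ × ℤ, f z ^ 2 = A2 * B2 := by
    rw [tsum_congr hf2]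
    have h := Summable.tsum_prod' (f := fun z : ℤ × ℤ =>
        (‖cu z.1‖^2 * (1 + |(z.1:ℝ)|)^3) * (‖cv z.2‖^2 * (1 + |(z.2:ℝ)|))) hprod
      (fun b => hv.mul_left (‖cu b‖^2 * (1 + |(b:ℝ)|)^3))
    rw [h]
    simp_rw [tsum_mul_left]
    rw [tsum_mul_right, ← hA2def, ← hB2def]
  -- reindexing for g^2
  set σ : ℤ × ℤ ≃ ℤ × ℤ :=
    ⟨fun w => (w.1, w.1 + w.2), fun z => (z.1, z.2 - z.1),
      fun w => by simp, fun z => by simp⟩ with hσdef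
  have hσ : ∀ w : ℤ × ℤ, g (σ w) ^ 2 =
      ‖ca w.2‖^2 / ((1 + |(w.1:ℝ)|)^3 * (1 + |((w.1 + w.2 : ℤ) : ℝ)|)) := by
    intro w
    rw [hg2]
    simp [hσdef]
  set D : ℤ × ℤ → ℝ := fun w =>
    (2 * (1 / (1 + |(w.1:ℝ)|)^2)) * (‖ca w.2‖^2 / (1 + |(w.2:ℝ)|)) with hDdef
  have hD : Summable D :=
    (aux_S2.mul_left 2).mul_of_nonneg ha (fun p => by positivity) (fun m => by positivity)
  have hbd : ∀ w : ℤ × ℤ,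
      ‖ca w.2‖^2 / ((1 + |(w.1:ℝ)|)^3 * (1 + |((w.1 + w.2 : ℤ) : ℝ)|)) ≤ D w := by
    intro w
    have h := aux_key w.1 w.2
    have hc : (0:ℝ) ≤ ‖ca w.2‖^2 := by positivity
    have h' := mul_le_mul_of_nonneg_left h hc
    calc ‖ca w.2‖^2 / ((1 + |(w.1:ℝ)|)^3 * (1 + |((w.1 + w.2 : ℤ) : ℝ)|))
        = ‖ca w.2‖^2 * (1 / ((1 + |(w.1:ℝ)|)^3 * (1 + |((w.1 + w.2 : ℤ) : ℝ)|))) := by ring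
      _ ≤ ‖ca w.2‖^2 * (2 / ((1 + |(w.2:ℝ)|) * (1 + |(w.1:ℝ)|)^2)) := h'
      _ = D w := by
          simp only [hDdef]
          have hp : (1 + |(w.1:ℝ)|) ≠ 0 := by positivity
          have hm' : (1 + |(w.2:ℝ)|) ≠ 0 := by positivity
          field_simp
  have hgs' : Summable (fun w : ℤ × ℤ => g (σ w) ^ 2) := by
    refine Summable.of_nonneg_of_le (fun w => by positivity) (fun w => ?_) hD
    rw [hσ w]; exact hbd w
  have hgs : Summable (fun z : ℤ × ℤ => g z ^ 2) := σ.summable_iff.1 hgs'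
  have htD : ∑' w : ℤ × ℤ, D w = 2 * S2 * K2 := by
    rw [hDdef]
    have h := Summable.tsum_prod' (f := fun w : ℤ × ℤ =>
        (2 * (1 / (1 + |(w.1:ℝ)|)^2)) * (‖ca w.2‖^2 / (1 + |(w.2:ℝ)|)))
      (hDdef ▸ hD) (fun b => ha.mul_left (2 * (1 / (1 + |(b:ℝ)|)^2)))
    rw [h]
    simp_rw [tsum_mul_left]
    rw [tsum_mul_right, tsum_mul_left, ← hS2def, ← hK2def]
  have htg : ∑' z : ℤ × ℤ, g z ^ 2 ≤ 2 * S2 * K2 := by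
    rw [← σ.tsum_eq (fun z : ℤ × ℤ => g z ^ 2)]
    calc (∑' w : ℤ × ℤ, g (σ w) ^ 2) ≤ ∑' w : ℤ × ℤ, D w := by
          refine Summable.tsum_le_tsum (fun w => ?_) hgs' hD
          rw [hσ w]; exact hbd w
      _ = 2 * S2 * K2 := htD
  -- Cauchy-Schwarz
  have hconj : Real.HolderConjugate 2 2 := Real.HolderConjugate.two_two
  have h2pow : ∀ x : ℝ, x ^ (2:ℝ) = x ^ 2 := fun x => by
    rw [show (2:ℝ) = ((2:ℕ):ℝ) by norm_num, Real.rpow_natCast]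
  have hfsR : Summable (fun z : ℤ × ℤ => f z ^ (2:ℝ)) :=
    hfs.congr fun z => (h2pow (f z)).symm
  have hgsR : Summable (fun z : ℤ × ℤ => g z ^ (2:ℝ)) :=
    hgs.congr fun z => (h2pow (g z)).symm
  have hCS := Real.inner_le_Lp_mul_Lq_tsum_of_nonneg hconj hf0 hg0 hfsR hgsR
  have hfg_t : (∑' pq : ℤ × ℤ, ‖cu pq.1‖ * ‖cv pq.2‖ * ‖ca (pq.2 - pq.1)‖)
      = ∑' z : ℤ × ℤ, f z * g z := tsum_congr fun z => (hfg z).symm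
  rw [hfg_t]
  refine hCS.trans ?_
  have e1 : (∑' z : ℤ × ℤ, f z ^ (2:ℝ)) = A2 * B2 := by
    simp_rw [h2pow]; exact htf
  have e2 : (∑' z : ℤ × ℤ, g z ^ (2:ℝ)) ≤ 2 * S2 * K2 := by
    simp_rw [h2pow]; exact htg
  have hgtnn : 0 ≤ ∑' z : ℤ × ℤ, g z ^ (2:ℝ) :=
    tsum_nonneg fun z => Real.rpow_nonneg (hg0 z) _
  rw [e1]
  calc (A2 * B2) ^ (1/2:ℝ) * (∑' z : ℤ × ℤ, g z ^ (2:ℝ)) ^ (1/2:ℝ)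
      ≤ (A2 * B2) ^ (1/2:ℝ) * (2 * S2 * K2) ^ (1/2:ℝ) := by
        refine mul_le_mul_of_nonneg_left ?_ (Real.rpow_nonneg (by positivity) _)
        exact Real.rpow_le_rpow hgtnn e2 (by norm_num)
    _ = Real.sqrt (A2 * B2) * Real.sqrt (2 * S2 * K2) := by
        rw [← Real.sqrt_eq_rpow, ← Real.sqrt_eq_rpow]
    _ = Real.sqrt (2 * S2) * Real.sqrt A2 * Real.sqrt B2 * Real.sqrt K2 := by
        rw [Real.sqrt_mul hA2nn, Real.sqrt_mul (by positivity : (0:ℝ) ≤ 2 * S2)]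
        ring
end
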